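/- arXiv:2001.09789 — 4 statements merged into one kernel-verified Lean document; each statement's English description precedes it below -/
import Mathlib

section
/- Let V be a finite-dimensional real normed vector space, let N : V → V be a nilpotent continuous linear endomorphism, and let r be a nonzero real number. Then the range of the endomorphism id − exp(r • N) equals the range of N, and the kernel of id − exp(r • N) equals the kernel of N. In particular, id − exp(r • N) induces a linear bijection from V / ker(N) onto the range of N. -/
open NormedSpace Finset

set_option maxHeartbeats 1000000 in
set_option synthInstance.maxHeartbeats 400000 in
/-- If `M` is nilpotent then `exp ℝ M = 1 + M * g` for some unit `g` commuting with `M`. -/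
lemma exp_nilpotent_factor {A : Type*} [NormedRing A] [NormedAlgebra ℝ A] [CompleteSpace A]
    (M : A) (hM : IsNilpotent M) :
    ∃ g : A, IsUnit g ∧ Commute M g ∧ NormedSpace.exp M = 1 + M * g := by
  obtain ⟨m, hm⟩ := hM
  have hpow : ∀ k, m ≤ k → M ^ k = 0 := by
    intro k hk
    calc M ^ k = M ^ m * M ^ (k - m) := by rw [← pow_add, Nat.add_sub_cancel' hk]
    _ = 0 := by rw [hm, zero_mul]
  set g : A := ∑ k ∈ range (m + 1), ((Nat.factorial (k + 1) : ℝ))⁻¹ • M ^ k with hg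
  set h : A := ∑ k ∈ range (m + 1), ((Nat.factorial (k + 2) : ℝ))⁻¹ • M ^ k with hh
  have hcg : Commute M g := by
    apply Commute.sum_right
    intro k _
    exact (Commute.pow_right (Commute.refl M) k).smul_right _
  have hch : Commute M h := by
    apply Commute.sum_right
    intro k _
    exact (Commute.pow_right (Commute.refl M) k).smul_right _
  have hexp : NormedSpace.exp M = ∑ k ∈ range (m + 2), ((Nat.factorial k : ℝ))⁻¹ • M ^ k := by
    rw [exp_eq_tsum (𝕂 := ℝ)]
    refine tsum_eq_sum ?_
    intro k hk
    have hkm : m ≤ k := by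
      have := Finset.mem_range.not.mp hk
      omega
    rw [hpow k hkm, smul_zero]
  have key : NormedSpace.exp M = 1 + M * g := by
    rw [hexp, Finset.sum_range_succ']
    simp only [pow_zero, Nat.factorial_zero, Nat.cast_one, inv_one, one_smul]
    rw [add_comm]
    congr 1
    rw [hg, Finset.mul_sum]
    refine Finset.sum_congr rfl fun k _ => ?_
    rw [mul_smul_comm, ← pow_succ']
  have hg1 : g = 1 + M * h := by
    have hgext : g = ∑ k ∈ range (m + 2), ((Nat.factorial (k + 1) : ℝ))⁻¹ • M ^ k := by
      rw [Finset.sum_range_succ, hpow (m + 1) (Nat.le_succ m), smul_zero, add_zero, hg]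
    rw [hgext, Finset.sum_range_succ']
    have h0 : ((Nat.factorial (0 + 1) : ℝ))⁻¹ • M ^ 0 = 1 := by
      norm_num
    rw [h0, add_comm]
    congr 1
    rw [hh, Finset.mul_sum]
    refine Finset.sum_congr rfl fun k _ => ?_
    rw [mul_smul_comm, ← pow_succ']
  have hunit : IsUnit g := by
    rw [hg1]
    refine IsNilpotent.isUnit_one_add ?_
    exact hch.isNilpotent_mul_right ⟨m, hm⟩
  exact ⟨g, hunit, hcg, key⟩

set_option maxHeartbeats 1000000 in
set_option synthInstance.maxHeartbeats 400000 in
/-- For a nilpotent continuous linear endomorphism `N` of a finite-dimensional real normed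
vector space `V` and a nonzero real number `r`, the endomorphism `id - exp (r • N)` has the
same range and the same kernel as `N`; in particular it induces a linear bijection from
`V ⧸ ker N` onto the range of `N`. -/
theorem range_ker_id_sub_exp_smul_nilpotent
    (V : Type*) [NormedAddCommGroup V] [NormedSpace ℝ V] [FiniteDimensional ℝ V]
    (N : V →L[ℝ] V) (hN : IsNilpotent N) (r : ℝ) (hr : r ≠ 0) :
    LinearMap.range (((1 : V →L[ℝ] V) - NormedSpace.exp (r • N) : V →L[ℝ] V) : V →ₗ[ℝ] V)
        = LinearMap.range (N : V →ₗ[ℝ] V) ∧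
    LinearMap.ker (((1 : V →L[ℝ] V) - NormedSpace.exp (r • N) : V →L[ℝ] V) : V →ₗ[ℝ] V)
        = LinearMap.ker (N : V →ₗ[ℝ] V) ∧
    ∃ e : (V ⧸ LinearMap.ker (N : V →ₗ[ℝ] V)) ≃ₗ[ℝ] LinearMap.range (N : V →ₗ[ℝ] V),
      ∀ v : V, (e (Submodule.Quotient.mk v) : V) = v - NormedSpace.exp (r • N) v := by
  set M : V →L[ℝ] V := r • N with hMdef
  have hMnil : IsNilpotent M := by
    obtain ⟨m, hm⟩ := hN
    refine ⟨m, ?_⟩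
    rw [hMdef, smul_pow, hm, smul_zero]
  obtain ⟨g, hgu, hcomm, hexp⟩ := exp_nilpotent_factor M hMnil
  set f : V →L[ℝ] V := (1 : V →L[ℝ] V) - NormedSpace.exp (r • N) with hfdef
  have hf : f = M * (-g) := by
    rw [hfdef, ← hMdef, hexp, mul_neg]
    abel
  have hf' : f = (-g) * M := by
    rw [hf, (hcomm.neg_right).eq]
  obtain ⟨u, hu⟩ := hgu.neg
  have hsurj : Function.Surjective ((-g : V →L[ℝ] V) : V → V) := by
    intro v
    refine ⟨((u⁻¹ : (V →L[ℝ] V)ˣ) : V →L[ℝ] V) v, ?_⟩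
    have h1 : (-g) * ((u⁻¹ : (V →L[ℝ] V)ˣ) : V →L[ℝ] V) = 1 := by
      rw [← hu]; exact u.mul_inv
    calc (-g) (((u⁻¹ : (V →L[ℝ] V)ˣ) : V →L[ℝ] V) v)
        = ((-g) * ((u⁻¹ : (V →L[ℝ] V)ˣ) : V →L[ℝ] V)) v := rfl
    _ = v := by rw [h1]; rfl
  have hinj : Function.Injective ((-g : V →L[ℝ] V) : V → V) := by
    intro a b hab
    have h1 : ((u⁻¹ : (V →L[ℝ] V)ˣ) : V →L[ℝ] V) * (-g) = 1 := by
      rw [← hu]; exact u.inv_mul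
    calc a = (((u⁻¹ : (V →L[ℝ] V)ˣ) : V →L[ℝ] V) * (-g)) a := by rw [h1]; rfl
    _ = (((u⁻¹ : (V →L[ℝ] V)ˣ) : V →L[ℝ] V) * (-g)) b := by
        show ((u⁻¹ : (V →L[ℝ] V)ˣ) : V →L[ℝ] V) ((-g) a) = _
        rw [hab]; rfl
    _ = b := by rw [h1]; rfl
  have hrangeM : LinearMap.range (M : V →ₗ[ℝ] V) = LinearMap.range (N : V →ₗ[ℝ] V) := by
    have hc : (M : V →ₗ[ℝ] V) = r • (N : V →ₗ[ℝ] V) := rfl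
    rw [hc, LinearMap.range_smul _ r hr]
  have hkerM : LinearMap.ker (M : V →ₗ[ℝ] V) = LinearMap.ker (N : V →ₗ[ℝ] V) := by
    have hc : (M : V →ₗ[ℝ] V) = r • (N : V →ₗ[ℝ] V) := rfl
    rw [hc, LinearMap.ker_smul _ r hr]
  have hrange : LinearMap.range (f : V →ₗ[ℝ] V) = LinearMap.range (N : V →ₗ[ℝ] V) := by
    have hc : (f : V →ₗ[ℝ] V) = (M : V →ₗ[ℝ] V) ∘ₗ ((-g : V →L[ℝ] V) : V →ₗ[ℝ] V) := by
      ext v; rw [hf]; rfl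
    have htop : LinearMap.range ((-g : V →L[ℝ] V) : V →ₗ[ℝ] V) = ⊤ :=
      LinearMap.range_eq_top.mpr hsurj
    rw [hc, LinearMap.range_comp, htop, Submodule.map_top, hrangeM]
  have hker : LinearMap.ker (f : V →ₗ[ℝ] V) = LinearMap.ker (N : V →ₗ[ℝ] V) := by
    have hc : (f : V →ₗ[ℝ] V) = ((-g : V →L[ℝ] V) : V →ₗ[ℝ] V) ∘ₗ (M : V →ₗ[ℝ] V) := by
      ext v; rw [hf']; rfl
    have hbot : LinearMap.ker ((-g : V →L[ℝ] V) : V →ₗ[ℝ] V) = ⊥ :=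
      LinearMap.ker_eq_bot.mpr hinj
    rw [hc, LinearMap.ker_comp, hbot, Submodule.comap_bot, hkerM]
  refine ⟨hrange, hker, ?_⟩
  let e₁ : (V ⧸ LinearMap.ker (N : V →ₗ[ℝ] V)) ≃ₗ[ℝ] (V ⧸ LinearMap.ker (f : V →ₗ[ℝ] V)) :=
    Submodule.quotEquivOfEq _ _ hker.symm
  let e₂ : (V ⧸ LinearMap.ker (f : V →ₗ[ℝ] V)) ≃ₗ[ℝ] LinearMap.range (f : V →ₗ[ℝ] V) :=
    LinearMap.quotKerEquivRange ((f : V →L[ℝ] V) : V →ₗ[ℝ] V)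
  let e₃ : LinearMap.range (f : V →ₗ[ℝ] V) ≃ₗ[ℝ] LinearMap.range (N : V →ₗ[ℝ] V) :=
    LinearEquiv.ofEq _ _ hrange
  refine ⟨e₁.trans (e₂.trans e₃), fun v => ?_⟩
  simp only [e₁, e₂, e₃]
  simp only [LinearEquiv.trans_apply, Submodule.quotEquivOfEq_mk,
    LinearMap.quotKerEquivRange_apply_mk, LinearEquiv.coe_ofEq_apply]
  show f v = v - NormedSpace.exp (r • N) v
  rw [hfdef]; rfl
end

section
/- Let (X, μ) be a probability space and let φ : ℝ × X → X be a jointly measurable flow: φ(0, ·) = id, φ(s+t, ·) = φ(s, φ(t, ·)) for all s, t ∈ ℝ, and each map φ(t, ·) preserves the measure μ. Let f : X → ℝ be bounded and measurable. Let g : X → ℝ be bounded and measurable, let K ≥ 0, and suppose there is a bounded measurable function Dg : X → ℝ with |Dg| ≤ K everywhere such that for every x ∈ X the function t ↦ g(φ(t, x)) is differentiable with derivative t ↦ Dg(φ(t, x)). Then | ∫_X f·g dμ | ≤ ( sup|g| + K ) · ∫_X sup_{s ∈ [0,1]} | ∫₀^s f(φ(t, x)) dt | dμ(x). -/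
open MeasureTheory Set

private lemma bddMeas_intervalIntegrable {h : ℝ → ℝ} (hm : Measurable h) {M : ℝ}
    (hb : ∀ t, |h t| ≤ M) (a b : ℝ) : IntervalIntegrable h volume a b :=
  (intervalIntegrable_const (μ := volume) (a := a) (b := b) (c := M)).mono_fun'
    hm.aestronglyMeasurable.restrict
    (Filter.Eventually.of_forall fun t => by simpa [Real.norm_eq_abs] using hb t)

private lemma bdd_integrable_finite {α : Type*} [MeasurableSpace α] {ν : Measure α}
    [IsFiniteMeasure ν] {h : α → ℝ} (hm : AEStronglyMeasurable h ν) {M : ℝ}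
    (hb : ∀ t, |h t| ≤ M) : Integrable h ν :=
  ⟨hm, HasFiniteIntegral.of_bounded (C := M)
    (Filter.Eventually.of_forall fun t => by simpa [Real.norm_eq_abs] using hb t)⟩

/-- Integration-by-parts inequality along a measure-preserving flow: for a bounded measurable
`f` and a bounded measurable `g` that is differentiable along the flow with derivative `Dg`
bounded by `K`, one has
`|∫ f·g dμ| ≤ (sup |g| + K) · ∫ sup_{s ∈ [0,1]} |∫₀^s f(φ_t x) dt| dμ(x)`. -/
theorem correlation_le_ergodic_integral
    {X : Type*} [MeasurableSpace X] (μ : Measure X) [IsProbabilityMeasure μ]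
    (φ : ℝ → X → X)
    (hφ_meas : Measurable (Function.uncurry φ))
    (hφ_zero : ∀ x, φ 0 x = x)
    (hφ_add : ∀ s t x, φ (s + t) x = φ s (φ t x))
    (hφ_inv : ∀ t, MeasurePreserving (φ t) μ μ)
    (f : X → ℝ) (hf : Measurable f) (hf_bdd : ∃ M, ∀ x, |f x| ≤ M)
    (g : X → ℝ) (hg : Measurable g) (hg_bdd : ∃ M, ∀ x, |g x| ≤ M)
    (K : ℝ) (hK : 0 ≤ K)
    (Dg : X → ℝ) (hDg : Measurable Dg) (hDg_bdd : ∀ x, |Dg x| ≤ K)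
    (hderiv : ∀ x t, HasDerivAt (fun s => g (φ s x)) (Dg (φ t x)) t) :
    |∫ x, f x * g x ∂μ| ≤
      ((⨆ x, |g x|) + K) *
        ∫ x, (⨆ s ∈ Set.Icc (0 : ℝ) 1, |∫ t in (0 : ℝ)..s, f (φ t x)|) ∂μ := by
  obtain ⟨Mf, hMf⟩ := hf_bdd
  obtain ⟨Mg, hMg⟩ := hg_bdd
  haveI hXne : Nonempty X := MeasureTheory.Measure.nonempty_of_neZero μ
  obtain ⟨x₀⟩ := hXne
  have hMf0 : 0 ≤ Mf := (abs_nonneg _).trans (hMf x₀)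
  set C : ℝ := ⨆ x, |g x| with hCdef
  set S : X → ℝ := fun x => ⨆ s ∈ Set.Icc (0 : ℝ) 1, |∫ t in (0 : ℝ)..s, f (φ t x)| with hSdef
  have hgC : ∀ y, |g y| ≤ C :=
    fun y => le_ciSup ⟨Mg, by rintro _ ⟨z, rfl⟩; exact hMg z⟩ y
  have hC0 : 0 ≤ C := (abs_nonneg _).trans (hgC x₀)
  -- basic measurability
  have morb : ∀ x : X, Measurable fun t : ℝ => φ t x := fun x =>
    hφ_meas.comp (measurable_id.prodMk measurable_const)
  -- boundedness of ergodic integrals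
  have hFbound : ∀ (x : X), ∀ s ∈ Set.Icc (0:ℝ) 1,
      |∫ t in (0:ℝ)..s, f (φ t x)| ≤ Mf := by
    intro x s hs
    have := intervalIntegral.norm_integral_le_of_norm_le_const
      (C := Mf) (a := (0:ℝ)) (b := s) (f := fun t => f (φ t x))
      (fun t _ => by simpa [Real.norm_eq_abs] using hMf (φ t x))
    rw [Real.norm_eq_abs] at this
    calc |∫ t in (0:ℝ)..s, f (φ t x)| ≤ Mf * |s - 0| := this
      _ ≤ Mf * 1 := by
          apply mul_le_mul_of_nonneg_left _ hMf0
          rw [sub_zero, abs_of_nonneg hs.1]; exact hs.2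
      _ = Mf := mul_one _
  have hbddcond : ∀ (x : X) (s : ℝ),
      (⨆ _ : s ∈ Set.Icc (0:ℝ) 1, |∫ t in (0:ℝ)..s, f (φ t x)|) ≤ max Mf 0 := by
    intro x s
    by_cases h : s ∈ Set.Icc (0:ℝ) 1
    · rw [ciSup_pos h]; exact le_max_of_le_left (hFbound x s h)
    · haveI : IsEmpty (s ∈ Set.Icc (0:ℝ) 1) := isEmpty_Prop.mpr h
      rw [Real.iSup_of_isEmpty]; exact le_max_right _ _
  have hbddS : ∀ x : X, BddAbove (Set.range fun s : ℝ =>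
      ⨆ _ : s ∈ Set.Icc (0:ℝ) 1, |∫ t in (0:ℝ)..s, f (φ t x)|) := by
    intro x
    exact ⟨max Mf 0, by rintro _ ⟨s, rfl⟩; exact hbddcond x s⟩
  have hFS : ∀ (x : X), ∀ s ∈ Set.Icc (0:ℝ) 1,
      |∫ t in (0:ℝ)..s, f (φ t x)| ≤ S x := by
    intro x s hs
    have h1 : (⨆ _ : s ∈ Set.Icc (0:ℝ) 1, |∫ t in (0:ℝ)..s, f (φ t x)|)
        = |∫ t in (0:ℝ)..s, f (φ t x)| := ciSup_pos hs
    rw [hSdef, ← h1]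
    exact le_ciSup (hbddS x) s
  have hS0 : ∀ x, 0 ≤ S x := by
    intro x
    have := hFS x 0 ⟨le_refl 0, zero_le_one⟩
    simpa using this
  have hSmax : ∀ x, S x ≤ max Mf 0 := fun x => ciSup_le (hbddcond x)
  -- rational parametrization of the supremum
  set proj : ℚ → ℝ := fun q => max 0 (min 1 (q:ℝ)) with hprojdef
  have hproj_mem : ∀ q, proj q ∈ Set.Icc (0:ℝ) 1 := fun q =>
    ⟨le_max_left _ _, max_le zero_le_one (min_le_left _ _)⟩
  have hbddT : ∀ x : X, BddAbove (Set.range fun q : ℚ =>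
      |∫ t in (0:ℝ)..(proj q), f (φ t x)|) := fun x =>
    ⟨Mf, by rintro _ ⟨q, rfl⟩; exact hFbound x _ (hproj_mem q)⟩
  have hFcont : ∀ x : X, Continuous fun s : ℝ => ∫ t in (0:ℝ)..s, f (φ t x) := by
    intro x
    exact intervalIntegral.continuous_primitive
      (fun a b => bddMeas_intervalIntegrable (hf.comp (morb x)) (fun t => hMf _) a b) 0
  have hST : ∀ x : X, S x = ⨆ q : ℚ, |∫ t in (0:ℝ)..(proj q), f (φ t x)| := by
    intro x
    apply le_antisymm
    · apply ciSup_le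
      intro s
      by_cases hs : s ∈ Set.Icc (0:ℝ) 1
      · have h1 : (⨆ _ : s ∈ Set.Icc (0:ℝ) 1, |∫ t in (0:ℝ)..s, f (φ t x)|)
            = |∫ t in (0:ℝ)..s, f (φ t x)| := ciSup_pos hs
        rw [h1]
        -- approximate s by rationals
        have hdense : s ∈ closure (Set.range ((↑) : ℚ → ℝ)) := by
          rw [Rat.denseRange_cast.closure_eq]; trivial
        obtain ⟨u, hu_mem, hu_lim⟩ := mem_closure_iff_seq_limit.mp hdense
        choose q hq using hu_mem
        have hlim2 : Filter.Tendsto (fun n => proj (q n)) Filter.atTop (nhds s) := by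
          have hcont : Continuous fun r : ℝ => max 0 (min 1 r) := by fun_prop
          have := (hcont.tendsto s).comp (by simpa [hq] using hu_lim :
            Filter.Tendsto (fun n => ((q n : ℝ))) Filter.atTop (nhds s))
          have hs' : max 0 (min 1 s) = s := by
            rw [min_eq_right hs.2, max_eq_right hs.1]
          simpa [Function.comp_def, hprojdef, hs'] using this
        have hlim3 : Filter.Tendsto (fun n => |∫ t in (0:ℝ)..(proj (q n)), f (φ t x)|)
            Filter.atTop (nhds (|∫ t in (0:ℝ)..s, f (φ t x)|)) :=
          ((hFcont x).abs.tendsto s).comp hlim2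
        exact le_of_tendsto hlim3 (Filter.Eventually.of_forall fun n =>
          le_ciSup (hbddT x) (q n))
      · haveI : IsEmpty (s ∈ Set.Icc (0:ℝ) 1) := isEmpty_Prop.mpr hs
        rw [Real.iSup_of_isEmpty]
        exact (abs_nonneg _).trans (le_ciSup (hbddT x) 0)
    · apply ciSup_le
      intro q
      exact hFS x (proj q) (hproj_mem q)
  -- measurability of x ↦ ∫ t in Ioc a b, f (φ t x)
  have mIoc : ∀ a b : ℝ, Measurable fun x : X => ∫ t in Set.Ioc a b, f (φ t x) := by
    intro a b
    have hm : StronglyMeasurable fun p : X × ℝ => f (φ p.2 p.1) :=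
      (hf.comp (hφ_meas.comp measurable_swap)).stronglyMeasurable
    exact (MeasureTheory.StronglyMeasurable.integral_prod_right'
      (ν := volume.restrict (Set.Ioc a b)) hm).measurable
  have mFx : ∀ s : ℝ, 0 ≤ s → Measurable fun x : X => ∫ t in (0:ℝ)..s, f (φ t x) := by
    intro s hs
    have heq : (fun x : X => ∫ t in (0:ℝ)..s, f (φ t x))
        = fun x : X => ∫ t in Set.Ioc (0:ℝ) s, f (φ t x) :=
      funext fun x => intervalIntegral.integral_of_le hs
    rw [heq]; exact mIoc 0 s
  have mS : Measurable S := by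
    have : S = fun x => ⨆ q : ℚ, |∫ t in (0:ℝ)..(proj q), f (φ t x)| := funext hST
    rw [this]
    exact Measurable.iSup fun q => (mFx (proj q) (hproj_mem q).1).abs
  have intS : Integrable S μ :=
    bdd_integrable_finite mS.aestronglyMeasurable (M := max Mf 0)
      (fun x => by rw [abs_of_nonneg (hS0 x)]; exact hSmax x)
  -- the restricted Lebesgue measure on (0,1]
  set ν : Measure ℝ := volume.restrict (Set.Ioc (0:ℝ) 1) with hνdef
  haveI : IsFiniteMeasure ν := by
    constructor
    rw [hνdef, Measure.restrict_apply_univ, Real.volume_Ioc]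
    simp
  have hνuniv : (ν Set.univ).toReal = 1 := by
    rw [hνdef, Measure.restrict_apply_univ, Real.volume_Ioc]
    norm_num
  have hstep1 : ∀ t : ℝ, ∫ x, f (φ t x) * g (φ t x) ∂μ = ∫ x, f x * g x ∂μ := by
    intro t
    have hsm : AEStronglyMeasurable (fun y => f y * g y) (Measure.map (φ t) μ) := by
      rw [(hφ_inv t).map_eq]; exact (hf.mul hg).aestronglyMeasurable
    calc ∫ x, f (φ t x) * g (φ t x) ∂μ
        = ∫ y, f y * g y ∂(Measure.map (φ t) μ) :=
          (integral_map (hφ_inv t).measurable.aemeasurable hsm).symm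
      _ = ∫ x, f x * g x ∂μ := by rw [(hφ_inv t).map_eq]
  have hprod_int : Integrable (Function.uncurry fun t x => f (φ t x) * g (φ t x))
      (ν.prod μ) := by
    apply bdd_integrable_finite (M := Mf * Mg)
    · exact ((hf.comp hφ_meas).mul (hg.comp hφ_meas)).aestronglyMeasurable
    · rintro ⟨t, x⟩
      simp only [Function.uncurry, abs_mul]
      exact mul_le_mul (hMf _) (hMg _) (abs_nonneg _) hMf0
  have key : ∫ x, f x * g x ∂μ = ∫ x, (∫ t, f (φ t x) * g (φ t x) ∂ν) ∂μ := by
    have h1 : ∫ t, (∫ x, f (φ t x) * g (φ t x) ∂μ) ∂ν = ∫ x, f x * g x ∂μ := by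
      simp only [hstep1]
      rw [integral_const, measureReal_def, hνuniv, one_smul]
    rw [← h1, MeasureTheory.integral_integral_swap hprod_int]
  -- pointwise (in x) integration-by-parts bound
  have hinner : ∀ x : X,
      |∫ t, f (φ t x) * g (φ t x) ∂ν| ≤ (C + K) * S x := by
    intro x
    have hfm : Measurable fun t : ℝ => f (φ t x) := hf.comp (morb x)
    have hgm : Measurable fun t : ℝ => g (φ t x) := hg.comp (morb x)
    have hDgm : Measurable fun u : ℝ => Dg (φ u x) := hDg.comp (morb x)
    have hDgint : ∀ a b : ℝ, IntervalIntegrable (fun u => Dg (φ u x)) volume a b :=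
      fun a b => bddMeas_intervalIntegrable hDgm (fun u => hDg_bdd _) a b
    have hg_eq : ∀ t : ℝ, g (φ t x) = g (φ 1 x) - ∫ u in t..(1:ℝ), Dg (φ u x) := by
      intro t
      have h := intervalIntegral.integral_eq_sub_of_hasDerivAt
        (f := fun s => g (φ s x)) (f' := fun u => Dg (φ u x))
        (fun u _ => hderiv x u) (hDgint t 1)
      have h' : ∫ u in t..(1:ℝ), Dg (φ u x) = g (φ 1 x) - g (φ t x) := h
      linarith
    have hprim : Continuous fun t : ℝ => ∫ u in t..(1:ℝ), Dg (φ u x) := by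
      have h1 : (fun t : ℝ => ∫ u in t..(1:ℝ), Dg (φ u x))
          = fun t : ℝ => -∫ u in (1:ℝ)..t, Dg (φ u x) :=
        funext fun t => intervalIntegral.integral_symm 1 t
      rw [h1]
      exact (intervalIntegral.continuous_primitive hDgint 1).neg
    have int1 : Integrable (fun t => f (φ t x) * g (φ 1 x)) ν :=
      bdd_integrable_finite (hfm.mul measurable_const).aestronglyMeasurable
        (M := Mf * |g (φ 1 x)|) (fun t => by
          rw [abs_mul]
          exact mul_le_mul_of_nonneg_right (hMf _) (abs_nonneg _))
    have hDgprim_bdd : ∀ t ∈ Set.Ioc (0:ℝ) 1, |∫ u in t..(1:ℝ), Dg (φ u x)| ≤ K := by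
      intro t ht
      have h2 := intervalIntegral.norm_integral_le_of_norm_le_const (C := K)
        (a := t) (b := (1:ℝ)) (f := fun u => Dg (φ u x))
        (fun u _ => by simpa [Real.norm_eq_abs] using hDg_bdd (φ u x))
      rw [Real.norm_eq_abs] at h2
      calc |∫ u in t..(1:ℝ), Dg (φ u x)| ≤ K * |1 - t| := h2
        _ ≤ K * 1 := by
            apply mul_le_mul_of_nonneg_left _ hK
            rw [abs_of_nonneg (by linarith [ht.2])]
            linarith [ht.1]
        _ = K := mul_one _
    have int2 : Integrable (fun t => f (φ t x) * ∫ u in t..(1:ℝ), Dg (φ u x)) ν := by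
      refine ⟨(hfm.mul hprim.measurable).aestronglyMeasurable,
        HasFiniteIntegral.of_bounded (C := Mf * K) ?_⟩
      filter_upwards [ae_restrict_mem measurableSet_Ioc] with t ht
      rw [Real.norm_eq_abs, abs_mul]
      exact mul_le_mul (hMf _) (hDgprim_bdd t ht) (abs_nonneg _) hMf0
    have split : ∫ t, f (φ t x) * g (φ t x) ∂ν
        = g (φ 1 x) * (∫ t in (0:ℝ)..1, f (φ t x))
          - ∫ t, (f (φ t x) * ∫ u in t..(1:ℝ), Dg (φ u x)) ∂ν := by
      have heq : (fun t => f (φ t x) * g (φ t x))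
          = fun t => f (φ t x) * g (φ 1 x)
            - f (φ t x) * ∫ u in t..(1:ℝ), Dg (φ u x) := by
        funext t; rw [hg_eq t]; ring
      rw [heq, integral_sub int1 int2]
      congr 1
      rw [intervalIntegral.integral_of_le zero_le_one, integral_mul_const, hνdef, mul_comm]
    classical
    set c : ℝ → ℝ → ℝ := fun t u => if t < u then f (φ t x) * Dg (φ u x) else 0 with hcdef
    have hcm : Measurable (Function.uncurry c) := by
      show Measurable fun p : ℝ × ℝ =>
        if p.1 < p.2 then f (φ p.1 x) * Dg (φ p.2 x) else 0
      exact Measurable.ite (measurableSet_lt measurable_fst measurable_snd)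
        ((hfm.comp measurable_fst).mul (hDgm.comp measurable_snd)) measurable_const
    have hcb : ∀ p : ℝ × ℝ, |Function.uncurry c p| ≤ Mf * K := by
      rintro ⟨t, u⟩
      show |if t < u then f (φ t x) * Dg (φ u x) else 0| ≤ Mf * K
      by_cases h : t < u
      · rw [if_pos h, abs_mul]
        exact mul_le_mul (hMf _) (hDg_bdd _) (abs_nonneg _) hMf0
      · rw [if_neg h, abs_zero]
        exact mul_nonneg hMf0 hK
    have hcint : Integrable (Function.uncurry c) (ν.prod ν) :=
      bdd_integrable_finite hcm.aestronglyMeasurable hcb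
    have hJ1 : ∀ t ∈ Set.Ioc (0:ℝ) 1,
        (∫ u, c t u ∂ν) = f (φ t x) * ∫ u in t..(1:ℝ), Dg (φ u x) := by
      intro t ht
      have h1 : (fun u => c t u)
          = fun u => f (φ t x) * ((Set.Ioi t).indicator (fun u => Dg (φ u x)) u) := by
        funext u
        rw [Set.indicator_apply]
        by_cases h : t < u <;> simp [hcdef, h, Set.mem_Ioi]
      rw [h1, integral_const_mul, integral_indicator measurableSet_Ioi, hνdef,
        Measure.restrict_restrict measurableSet_Ioi]
      have hset : Set.Ioi t ∩ Set.Ioc 0 1 = Set.Ioc t 1 := by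
        ext u
        simp only [Set.mem_inter_iff, Set.mem_Ioi, Set.mem_Ioc]
        constructor
        · rintro ⟨h1, _, h3⟩; exact ⟨h1, h3⟩
        · rintro ⟨h1, h2⟩; exact ⟨h1, lt_trans ht.1 h1, h2⟩
      rw [hset, ← intervalIntegral.integral_of_le ht.2]
    have hJ2 : ∀ u ∈ Set.Ioc (0:ℝ) 1,
        (∫ t, c t u ∂ν) = Dg (φ u x) * ∫ t in (0:ℝ)..u, f (φ t x) := by
      intro u hu
      have h1 : (fun t => c t u)
          = fun t => ((Set.Iio u).indicator (fun t => f (φ t x)) t) * Dg (φ u x) := by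
        funext t
        rw [Set.indicator_apply]
        by_cases h : t < u <;> simp [hcdef, h, Set.mem_Iio]
      rw [h1, integral_mul_const, integral_indicator measurableSet_Iio, hνdef,
        Measure.restrict_restrict measurableSet_Iio]
      have hset : Set.Iio u ∩ Set.Ioc 0 1 = Set.Ioo 0 u := by
        ext t
        simp only [Set.mem_inter_iff, Set.mem_Iio, Set.mem_Ioc, Set.mem_Ioo]
        constructor
        · rintro ⟨h1, h2, _⟩; exact ⟨h2, h1⟩
        · rintro ⟨h1, h2⟩; exact ⟨h2, h1, le_trans (le_of_lt h2) hu.2⟩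
      rw [hset, ← integral_Ioc_eq_integral_Ioo,
        ← intervalIntegral.integral_of_le (le_of_lt hu.1), mul_comm]
    have hJ : ∫ t, (f (φ t x) * ∫ u in t..(1:ℝ), Dg (φ u x)) ∂ν
        = ∫ u, (Dg (φ u x) * ∫ t in (0:ℝ)..u, f (φ t x)) ∂ν := by
      have e1 : ∫ t, (f (φ t x) * ∫ u in t..(1:ℝ), Dg (φ u x)) ∂ν
          = ∫ t, (∫ u, c t u ∂ν) ∂ν := by
        apply integral_congr_ae
        filter_upwards [ae_restrict_mem measurableSet_Ioc] with t ht
        exact (hJ1 t ht).symm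
      have e2 : ∫ u, (∫ t, c t u ∂ν) ∂ν
          = ∫ u, (Dg (φ u x) * ∫ t in (0:ℝ)..u, f (φ t x)) ∂ν := by
        apply integral_congr_ae
        filter_upwards [ae_restrict_mem measurableSet_Ioc] with u hu
        exact hJ2 u hu
      rw [e1, MeasureTheory.integral_integral_swap hcint, e2]
    have hB1 : |g (φ 1 x) * ∫ t in (0:ℝ)..1, f (φ t x)| ≤ C * S x := by
      rw [abs_mul]
      exact mul_le_mul (hgC _) (hFS x 1 ⟨zero_le_one, le_refl 1⟩) (abs_nonneg _) hC0
    have hB2 : |∫ u, (Dg (φ u x) * ∫ t in (0:ℝ)..u, f (φ t x)) ∂ν| ≤ K * S x := by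
      have hle : ∀ᵐ u ∂ν, ‖Dg (φ u x) * ∫ t in (0:ℝ)..u, f (φ t x)‖ ≤ K * S x := by
        filter_upwards [ae_restrict_mem measurableSet_Ioc] with u hu
        rw [Real.norm_eq_abs, abs_mul]
        exact mul_le_mul (hDg_bdd _) (hFS x u ⟨le_of_lt hu.1, hu.2⟩) (abs_nonneg _) hK
      have h3 := norm_integral_le_of_norm_le (integrable_const (K * S x)) hle
      rw [Real.norm_eq_abs, integral_const, measureReal_def, hνuniv, one_smul] at h3
      exact h3
    calc |∫ t, f (φ t x) * g (φ t x) ∂ν|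
        = |g (φ 1 x) * (∫ t in (0:ℝ)..1, f (φ t x))
            - ∫ u, (Dg (φ u x) * ∫ t in (0:ℝ)..u, f (φ t x)) ∂ν| := by rw [split, hJ]
      _ ≤ |g (φ 1 x) * (∫ t in (0:ℝ)..1, f (φ t x))|
            + |∫ u, (Dg (φ u x) * ∫ t in (0:ℝ)..u, f (φ t x)) ∂ν| := abs_sub _ _
      _ ≤ C * S x + K * S x := add_le_add hB1 hB2
      _ = (C + K) * S x := by ring
  -- final assembly
  have hCK0 : 0 ≤ C + K := add_nonneg hC0 hK
  calc |∫ x, f x * g x ∂μ|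
      = |∫ x, (∫ t, f (φ t x) * g (φ t x) ∂ν) ∂μ| := by rw [key]
    _ ≤ ∫ x, (C + K) * S x ∂μ := by
        have := norm_integral_le_of_norm_le (intS.const_mul (C + K))
          (Filter.Eventually.of_forall fun x => by
            rw [Real.norm_eq_abs]; exact hinner x)
        simpa [Real.norm_eq_abs] using this
    _ = (C + K) * ∫ x, S x ∂μ := integral_const_mul _ _
end

section
/- Let (X, μ) be a probability space and let φ : ℝ × X → X be a jointly measurable flow: φ(0, ·) = id, φ(s+t, ·) = φ(s, φ(t, ·)) for all s, t ∈ ℝ, and each map φ(t, ·) preserves μ. Let λ > 1 and let T : X → X be a measure-preserving map satisfying the renormalization identity T(φ(t, x)) = φ(λ t, T x) for all t ∈ ℝ and x ∈ X. Let f : X → ℝ be bounded measurable and suppose there exist C > 0 and γ ∈ (0, 1) such that | ∫₀^S f(φ(t, x)) dt | ≤ C · S^{1-γ} for all x ∈ X and all S > 0. Let g : X → ℝ be bounded measurable, K ≥ 0, and suppose there is a bounded measurable Dg : X → ℝ with |Dg| ≤ K such that for every x the function t ↦ g(φ(t, x)) is differentiable with derivative t ↦ Dg(φ(t, x)). Then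 for every natural number n: | ∫_X f(Tⁿ x) · g(x) dμ(x) | ≤ C · ( sup|g| + K ) · λ^{-γ n}. -/
open MeasureTheory

private lemma bdd_integrable {α : Type*} [MeasurableSpace α] {μ : Measure α} [IsFiniteMeasure μ]
    {u : α → ℝ} (hu : Measurable u) {B : ℝ} (hB : ∀ a, |u a| ≤ B) : Integrable u μ :=
  (integrable_const B).mono' hu.aestronglyMeasurable
    (Filter.Eventually.of_forall fun a => by simpa [Real.norm_eq_abs] using hB a)

private lemma bdd_intervalIntegrable {u : ℝ → ℝ} (hu : Measurable u) {B : ℝ}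
    (hB : ∀ t, |u t| ≤ B) (a b : ℝ) : IntervalIntegrable u volume a b :=
  (intervalIntegrable_const (c := B)).mono_fun hu.aestronglyMeasurable
    (Filter.Eventually.of_forall fun t => by
      simpa [Real.norm_eq_abs] using (hB t).trans (le_abs_self B))

/-- Abstract exponential mixing of a renormalizing map (Proposition 8.2 of the paper):
if `T` renormalizes the measure-preserving flow `φ` via `T (φ t x) = φ (λ t) (T x)` with
`λ > 1`, and the ergodic integrals of `f` satisfy `|∫₀^S f(φ_t x) dt| ≤ C S^(1-γ)`, then for
every bounded observable `g`, differentiable along the flow with derivative bounded by `K`,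
`|∫ f(Tⁿ x) g(x) dμ| ≤ C (sup |g| + K) λ^(-γ n)`. -/
theorem exponential_mixing_of_renormalization
    {X : Type*} [MeasurableSpace X] (μ : Measure X) [IsProbabilityMeasure μ]
    (φ : ℝ → X → X)
    (hφ_meas : Measurable (Function.uncurry φ))
    (hφ_zero : ∀ x, φ 0 x = x)
    (hφ_add : ∀ s t x, φ (s + t) x = φ s (φ t x))
    (hφ_inv : ∀ t, MeasurePreserving (φ t) μ μ)
    (lam : ℝ) (hlam : 1 < lam)
    (T : X → X) (hT : MeasurePreserving T μ μ)
    (hren : ∀ t x, T (φ t x) = φ (lam * t) (T x))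
    (f : X → ℝ) (hf : Measurable f) (hf_bdd : ∃ M, ∀ x, |f x| ≤ M)
    (C : ℝ) (hC : 0 < C) (γ : ℝ) (hγ : 0 < γ) (hγ1 : γ < 1)
    (hergodic : ∀ x : X, ∀ S : ℝ, 0 < S →
      |∫ t in (0 : ℝ)..S, f (φ t x)| ≤ C * S ^ (1 - γ))
    (g : X → ℝ) (hg : Measurable g) (hg_bdd : ∃ M, ∀ x, |g x| ≤ M)
    (K : ℝ) (hK : 0 ≤ K)
    (Dg : X → ℝ) (hDg : Measurable Dg) (hDg_bdd : ∀ x, |Dg x| ≤ K)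
    (hderiv : ∀ x t, HasDerivAt (fun s => g (φ s x)) (Dg (φ t x)) t) :
    ∀ n : ℕ,
      |∫ x, f (T^[n] x) * g x ∂μ| ≤
        C * ((⨆ x, |g x|) + K) * lam ^ (-(γ * n)) := by
  intro n
  obtain ⟨M, hM⟩ := hf_bdd
  obtain ⟨Mg, hMg⟩ := hg_bdd
  have hlam0 : (0:ℝ) < lam := lt_trans one_pos hlam
  have hne : Nonempty X := by
    by_contra hX
    have h0 : (Set.univ : Set X) = ∅ := Set.univ_eq_empty_iff.mpr (not_nonempty_iff.mp hX)
    have := measure_univ (μ := μ)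
    rw [h0] at this
    simp at this
  obtain ⟨x₀⟩ := hne
  set G : ℝ := ⨆ x, |g x| with hGdef
  have hGbdd : BddAbove (Set.range fun x => |g x|) := ⟨Mg, by rintro _ ⟨x, rfl⟩; exact hMg x⟩
  have hgG : ∀ x, |g x| ≤ G := fun x => le_ciSup hGbdd x
  have hG0 : 0 ≤ G := le_trans (abs_nonneg _) (hgG x₀)
  set E : ℝ := C * lam ^ (-(γ * (n:ℝ))) with hEdef
  have hE0 : 0 ≤ E := mul_nonneg hC.le (Real.rpow_nonneg hlam0.le _)
  set h : X → ℝ := fun x => f (T^[n] x) with hhdef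
  have hTn : MeasurePreserving (T^[n]) μ μ := hT.iterate n
  have hh_meas : Measurable h := hf.comp hTn.measurable
  have hh_bdd : ∀ x, |h x| ≤ M := fun x => hM _
  have hM0 : 0 ≤ M := le_trans (abs_nonneg _) (hM x₀)
  have hren_iter : ∀ (m : ℕ) (t : ℝ) (x : X), T^[m] (φ t x) = φ (lam ^ m * t) (T^[m] x) := by
    intro m
    induction m with
    | zero => intro t x; simp
    | succ m ih =>
      intro t x
      rw [Function.iterate_succ_apply', ih, hren,
        show lam * (lam ^ m * t) = lam ^ (m + 1) * t by ring, Function.iterate_succ_apply']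
  -- ergodic bound for h on [0, S], S ∈ (0,1]
  have herg_h : ∀ (x : X) (S : ℝ), 0 < S → S ≤ 1 → |∫ t in (0:ℝ)..S, h (φ t x)| ≤ E := by
    intro x S hS hS1
    have hln : (0:ℝ) < lam ^ n := pow_pos hlam0 n
    have h1 : ∫ t in (0:ℝ)..S, h (φ t x)
        = ∫ t in (0:ℝ)..S, f (φ (lam ^ n * t) (T^[n] x)) := by
      apply intervalIntegral.integral_congr
      intro t _
      show f (T^[n] (φ t x)) = _
      rw [hren_iter n t x]
    have h2 := intervalIntegral.integral_comp_mul_left (a := (0:ℝ)) (b := S)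
        (fun u => f (φ u (T^[n] x))) (c := lam ^ n) hln.ne'
    rw [mul_zero] at h2
    have h3 := hergodic (T^[n] x) (lam ^ n * S) (by positivity)
    have key : ((lam:ℝ) ^ n)⁻¹ * (lam ^ n * S) ^ (1 - γ) ≤ lam ^ (-(γ * (n:ℝ))) := by
      rw [Real.mul_rpow hln.le hS.le]
      have e1 : ((lam:ℝ) ^ n)⁻¹ = lam ^ (-(n:ℝ)) := by
        rw [← Real.rpow_natCast lam n, ← Real.rpow_neg hlam0.le]
      have e2 : ((lam:ℝ) ^ n) ^ (1 - γ) = lam ^ ((n:ℝ) * (1 - γ)) := by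
        rw [← Real.rpow_natCast lam n, ← Real.rpow_mul hlam0.le]
      rw [e1, e2, ← mul_assoc, ← Real.rpow_add hlam0]
      calc lam ^ (-(n:ℝ) + (n:ℝ) * (1 - γ)) * S ^ (1 - γ)
          ≤ lam ^ (-(n:ℝ) + (n:ℝ) * (1 - γ)) * 1 :=
            mul_le_mul_of_nonneg_left (Real.rpow_le_one hS.le hS1 (by linarith))
              (Real.rpow_nonneg hlam0.le _)
        _ = lam ^ (-(γ * (n:ℝ))) := by rw [mul_one]; congr 1; ring
    calc |∫ t in (0:ℝ)..S, h (φ t x)|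
        = ((lam:ℝ) ^ n)⁻¹ * |∫ u in (0:ℝ)..(lam ^ n * S), f (φ u (T^[n] x))| := by
          rw [h1, h2, smul_eq_mul, abs_mul, abs_of_pos (inv_pos.mpr hln)]
      _ ≤ ((lam:ℝ) ^ n)⁻¹ * (C * (lam ^ n * S) ^ (1 - γ)) :=
          mul_le_mul_of_nonneg_left h3 (inv_pos.mpr hln).le
      _ = C * (((lam:ℝ) ^ n)⁻¹ * (lam ^ n * S) ^ (1 - γ)) := by ring
      _ ≤ C * lam ^ (-(γ * (n:ℝ))) := mul_le_mul_of_nonneg_left key hC.le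
  -- ergodic bound on subintervals of [0,1]
  have herg_sub : ∀ (x : X) (a b : ℝ), 0 ≤ a → a ≤ b → b ≤ 1 →
      |∫ t in a..b, h (φ t x)| ≤ E := by
    intro x a b ha hab hb1
    rcases eq_or_lt_of_le hab with rfl | hab'
    · simp [hE0]
    · have key : ∫ t in a..b, h (φ t x) = ∫ t in (0:ℝ)..(b - a), h (φ t (φ a x)) := by
        have h4 := intervalIntegral.integral_comp_add_right (a := (0:ℝ)) (b := b - a)
          (fun t => h (φ t x)) a
        simp only [zero_add, sub_add_cancel] at h4
        rw [← h4]
        apply intervalIntegral.integral_congr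
        intro t _
        simp only [hφ_add]
      rw [key]
      exact herg_h (φ a x) (b - a) (by linarith) (by linarith)
  -- the measure ν on [0,1]
  set ν : Measure ℝ := volume.restrict (Set.Ioc (0:ℝ) 1) with hνdef
  haveI hνfin : IsFiniteMeasure ν := by
    constructor
    rw [hνdef, Measure.restrict_apply_univ, Real.volume_Ioc]
    exact ENNReal.ofReal_lt_top
  have hνuniv : (ν Set.univ).toReal = 1 := by
    rw [hνdef, Measure.restrict_apply_univ, Real.volume_Ioc]
    norm_num
  -- step A: invariance under the flow
  have stepA : ∀ t : ℝ, ∫ x, h x * g x ∂μ = ∫ x, h (φ t x) * g (φ t x) ∂μ := by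
    intro t
    have h5 := integral_map (μ := μ) (φ := φ t) ((hφ_inv t).measurable.aemeasurable)
      (f := fun y => h y * g y) ((hh_meas.mul hg).aestronglyMeasurable)
    rw [(hφ_inv t).map_eq] at h5
    simpa using h5
  -- step B: Fubini in (t, x)
  have hQmeas : Measurable (fun p : ℝ × X => h (φ p.1 p.2) * g (φ p.1 p.2)) :=
    ((hh_meas.comp hφ_meas).mul (hg.comp hφ_meas))
  have hQint : Integrable (Function.uncurry fun t x => h (φ t x) * g (φ t x)) (ν.prod μ) :=
    bdd_integrable hQmeas (B := M * G) (fun p => by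
      show |h (φ p.1 p.2) * g (φ p.1 p.2)| ≤ M * G
      rw [abs_mul]
      exact mul_le_mul (hh_bdd _) (hgG _) (abs_nonneg _) hM0)
  have hswap := integral_integral_swap hQint
  have c1 : ∫ x, h x * g x ∂μ = ∫ x, (∫ t, h (φ t x) * g (φ t x) ∂ν) ∂μ := by
    rw [← hswap]
    have c2 : ∫ t, (∫ x, h (φ t x) * g (φ t x) ∂μ) ∂ν
        = ∫ t, (∫ x, h x * g x ∂μ) ∂ν :=
      integral_congr_ae (Filter.Eventually.of_forall fun t => (stepA t).symm)
    rw [c2, integral_const, measureReal_def, hνuniv, one_smul]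
  -- pointwise bound on the inner integral
  have key : ∀ x : X, |∫ t, h (φ t x) * g (φ t x) ∂ν| ≤ (G + K) * E := by
    intro x
    have hmflow : Measurable fun t : ℝ => φ t x :=
      hφ_meas.comp (measurable_id.prodMk measurable_const)
    set htil : ℝ → ℝ := fun t => h (φ t x) with hhtil
    set gtil : ℝ → ℝ := fun t => g (φ t x) with hgtil
    set Dtil : ℝ → ℝ := fun t => Dg (φ t x) with hDtil
    have hmh : Measurable htil := hh_meas.comp hmflow
    have hmg : Measurable gtil := hg.comp hmflow
    have hmD : Measurable Dtil := hDg.comp hmflow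
    have hDb : ∀ t, |Dtil t| ≤ K := fun t => hDg_bdd _
    have hgb : ∀ t, |gtil t| ≤ G := fun t => hgG _
    have hhb : ∀ t, |htil t| ≤ M := fun t => hh_bdd _
    have hftc : ∀ t : ℝ, ∫ s in (0:ℝ)..t, Dtil s = gtil t - gtil 0 := fun t =>
      intervalIntegral.integral_eq_sub_of_hasDerivAt (fun s _ => hderiv x s)
        (bdd_intervalIntegrable hmD hDb 0 t)
    -- rewrite as an interval integral
    have hQx : ∫ t, h (φ t x) * g (φ t x) ∂ν = ∫ t in (0:ℝ)..1, htil t * gtil t := by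
      rw [intervalIntegral.integral_of_le zero_le_one]
    -- split
    have I1 : IntervalIntegrable (fun t => gtil 0 * htil t) volume 0 1 :=
      bdd_intervalIntegrable (hmh.const_mul _) (B := G * M) (fun t => by
        rw [abs_mul]; exact mul_le_mul (hgb _) (hhb _) (abs_nonneg _) hG0) 0 1
    have I2 : IntervalIntegrable (fun t => htil t * (gtil t - gtil 0)) volume 0 1 :=
      bdd_intervalIntegrable (hmh.mul (hmg.sub measurable_const)) (B := M * (G + G))
        (fun t => by
          show |htil t * (gtil t - gtil 0)| ≤ M * (G + G)
          rw [abs_mul]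
          refine mul_le_mul (hhb _) ?_ (abs_nonneg _) hM0
          rw [sub_eq_add_neg]
          refine (abs_add_le _ _).trans ?_
          rw [abs_neg]
          exact add_le_add (hgb _) (hgb _)) 0 1
    have hsplit : ∫ t in (0:ℝ)..1, htil t * gtil t
        = gtil 0 * (∫ t in (0:ℝ)..1, htil t)
          + ∫ t in (0:ℝ)..1, htil t * (gtil t - gtil 0) := by
      rw [← intervalIntegral.integral_const_mul, ← intervalIntegral.integral_add I1 I2]
      apply intervalIntegral.integral_congr
      intro t _
      ring
    -- term 1
    have hterm1 : |gtil 0 * (∫ t in (0:ℝ)..1, htil t)| ≤ G * E := by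
      rw [abs_mul]
      exact mul_le_mul (hgb _) (herg_sub x 0 1 le_rfl zero_le_one le_rfl) (abs_nonneg _) hG0
    -- term 2 : triangle Fubini
    set P : ℝ × ℝ → ℝ := fun p => if p.2 ≤ p.1 then htil p.1 * Dtil p.2 else 0 with hPdef
    have hPmeas : Measurable P := by
      apply Measurable.ite (measurableSet_le measurable_snd measurable_fst)
      · exact (hmh.comp measurable_fst).mul (hmD.comp measurable_snd)
      · exact measurable_const
    have hPbdd : ∀ p : ℝ × ℝ, |P p| ≤ M * K := by
      intro p
      rw [hPdef]
      by_cases hc : p.2 ≤ p.1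
      · simp only [if_pos hc]
        rw [abs_mul]
        exact mul_le_mul (hhb _) (hDb _) (abs_nonneg _) hM0
      · simp only [if_neg hc, abs_zero]
        exact mul_nonneg hM0 hK
    have hPint : Integrable (Function.uncurry fun t s => P (t, s)) (ν.prod ν) :=
      bdd_integrable hPmeas hPbdd
    have hswap2 := integral_integral_swap hPint
    have inner1 : ∀ t ∈ Set.Ioc (0:ℝ) 1,
        (∫ s, P (t, s) ∂ν) = htil t * ∫ s in (0:ℝ)..t, Dtil s := by
      intro t ht
      have hset : Set.Iic t ∩ Set.Ioc (0:ℝ) 1 = Set.Ioc 0 t := by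
        ext s
        simp only [Set.mem_inter_iff, Set.mem_Iic, Set.mem_Ioc]
        constructor
        · rintro ⟨h1, h2, _⟩; exact ⟨h2, h1⟩
        · rintro ⟨h1, h2⟩; exact ⟨h2, h1, h2.trans ht.2⟩
      calc ∫ s, P (t, s) ∂ν
          = ∫ s, Set.indicator (Set.Iic t) (fun s => htil t * Dtil s) s ∂ν := by
            apply integral_congr_ae (Filter.Eventually.of_forall fun s => ?_)
            rw [hPdef]
            simp only [Set.indicator_apply, Set.mem_Iic]
        _ = ∫ s in Set.Iic t, htil t * Dtil s ∂ν := integral_indicator measurableSet_Iic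
        _ = ∫ s in Set.Ioc (0:ℝ) t, htil t * Dtil s ∂(volume : Measure ℝ) := by
            rw [hνdef, Measure.restrict_restrict measurableSet_Iic, hset]
        _ = htil t * ∫ s in (0:ℝ)..t, Dtil s := by
            rw [intervalIntegral.integral_of_le ht.1.le, integral_const_mul]
    have inner2 : ∀ s ∈ Set.Ioc (0:ℝ) 1,
        (∫ t, P (t, s) ∂ν) = Dtil s * ∫ t in s..1, htil t := by
      intro s hs
      have hset : Set.Ici s ∩ Set.Ioc (0:ℝ) 1 = Set.Icc s 1 := by
        ext t
        simp only [Set.mem_inter_iff, Set.mem_Ici, Set.mem_Ioc, Set.mem_Icc]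
        constructor
        · rintro ⟨h1, _, h3⟩; exact ⟨h1, h3⟩
        · rintro ⟨h1, h2⟩; exact ⟨h1, hs.1.trans_le h1, h2⟩
      calc ∫ t, P (t, s) ∂ν
          = ∫ t, Set.indicator (Set.Ici s) (fun t => htil t * Dtil s) t ∂ν := by
            apply integral_congr_ae (Filter.Eventually.of_forall fun t => ?_)
            rw [hPdef]
            simp only [Set.indicator_apply, Set.mem_Ici]
        _ = ∫ t in Set.Ici s, htil t * Dtil s ∂ν := integral_indicator measurableSet_Ici
        _ = ∫ t in Set.Icc s 1, htil t * Dtil s ∂(volume : Measure ℝ) := by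
            rw [hνdef, Measure.restrict_restrict measurableSet_Ici, hset]
        _ = ∫ t in Set.Ioc s 1, htil t * Dtil s ∂(volume : Measure ℝ) := by
            rw [Measure.restrict_congr_set Ioc_ae_eq_Icc]
        _ = Dtil s * ∫ t in s..1, htil t := by
            rw [intervalIntegral.integral_of_le hs.2, integral_mul_const]
            exact mul_comm _ _
    have hterm2 : |∫ t in (0:ℝ)..1, htil t * (gtil t - gtil 0)| ≤ K * E := by
      have e1 : ∫ t in (0:ℝ)..1, htil t * (gtil t - gtil 0)
          = ∫ t in (0:ℝ)..1, htil t * ∫ s in (0:ℝ)..t, Dtil s := by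
        apply intervalIntegral.integral_congr
        intro t _
        show htil t * (gtil t - gtil 0) = htil t * ∫ s in (0:ℝ)..t, Dtil s
        rw [hftc t]
      have e2 : ∫ t in (0:ℝ)..1, htil t * ∫ s in (0:ℝ)..t, Dtil s
          = ∫ t, (∫ s, P (t, s) ∂ν) ∂ν := by
        rw [intervalIntegral.integral_of_le zero_le_one]
        apply integral_congr_ae
        filter_upwards [ae_restrict_mem measurableSet_Ioc] with t ht
        exact (inner1 t ht).symm
      have e3 : ∫ s, (∫ t, P (t, s) ∂ν) ∂ν
          = ∫ s, (Dtil s * ∫ t in s..1, htil t) ∂ν := by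
        apply integral_congr_ae
        filter_upwards [ae_restrict_mem measurableSet_Ioc] with s hs
        exact inner2 s hs
      rw [e1, e2, hswap2, e3]
      have hb : ∀ᵐ s ∂ν, ‖Dtil s * ∫ t in s..1, htil t‖ ≤ K * E := by
        filter_upwards [ae_restrict_mem measurableSet_Ioc] with s hs
        rw [Real.norm_eq_abs, abs_mul]
        exact mul_le_mul (hDb _) (herg_sub x s 1 hs.1.le hs.2 le_rfl) (abs_nonneg _) hK
      calc |∫ s, (Dtil s * ∫ t in s..1, htil t) ∂ν|
          ≤ K * E * (ν Set.univ).toReal := norm_integral_le_of_norm_le_const hb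
        _ = K * E := by rw [hνuniv, mul_one]
    calc |∫ t, h (φ t x) * g (φ t x) ∂ν|
        = |gtil 0 * (∫ t in (0:ℝ)..1, htil t)
            + ∫ t in (0:ℝ)..1, htil t * (gtil t - gtil 0)| := by rw [hQx, hsplit]
      _ ≤ |gtil 0 * (∫ t in (0:ℝ)..1, htil t)|
            + |∫ t in (0:ℝ)..1, htil t * (gtil t - gtil 0)| := abs_add_le _ _
      _ ≤ G * E + K * E := add_le_add hterm1 hterm2
      _ = (G + K) * E := by ring
  -- final assembly
  show |∫ x, h x * g x ∂μ| ≤ C * (G + K) * lam ^ (-(γ * (n:ℝ)))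
  rw [c1]
  have hb : ∀ᵐ x ∂μ, ‖∫ t, h (φ t x) * g (φ t x) ∂ν‖ ≤ (G + K) * E :=
    Filter.Eventually.of_forall fun x => by
      rw [Real.norm_eq_abs]; exact key x
  calc |∫ x, (∫ t, h (φ t x) * g (φ t x) ∂ν) ∂μ|
      ≤ (G + K) * E * (μ Set.univ).toReal := by
        have := norm_integral_le_of_norm_le_const (μ := μ) hb
        rwa [Real.norm_eq_abs] at this
    _ = C * (G + K) * lam ^ (-(γ * (n:ℝ))) := by
        rw [measure_univ, ENNReal.toReal_one, mul_one, hEdef]; ring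
end

section
/- Let L be the free Lie algebra over ℝ on three generators X₁, X₂, X₃. Let α₂, α₃, b₁, b₂, b₃ ∈ ℝ and set V = X₁ + α₂·X₂ + α₃·X₃ and W = b₁·⁅X₁, X₂⁆ + b₂·⁅X₂, X₃⁆ + b₃·⁅X₁, X₃⁆. If ⁅V, W⁆ = 0 in L, then b₁ = b₂ = b₃ = 0, i.e. W = 0. -/
/-- `E₁₂ + E₂₃` in `gl(4, ℝ)`. -/
noncomputable def flaAux_A : Matrix (Fin 4) (Fin 4) ℝ :=
  !![0,1,0,0; 0,0,1,0; 0,0,0,0; 0,0,0,0]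

/-- `E₃₄` in `gl(4, ℝ)`. -/
noncomputable def flaAux_B : Matrix (Fin 4) (Fin 4) ℝ :=
  !![0,0,0,0; 0,0,0,0; 0,0,0,1; 0,0,0,0]

/-- `E₃₁` in `gl(3, ℝ)`. -/
noncomputable def flaAux_C : Matrix (Fin 3) (Fin 3) ℝ := !![0,0,0; 0,0,0; 1,0,0]

/-- `E₁₂` in `gl(3, ℝ)`. -/
noncomputable def flaAux_D : Matrix (Fin 3) (Fin 3) ℝ := !![0,1,0; 0,0,0; 0,0,0]

/-- `E₂₃` in `gl(3, ℝ)`. -/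
noncomputable def flaAux_E : Matrix (Fin 3) (Fin 3) ℝ := !![0,0,0; 0,0,1; 0,0,0]

attribute [local instance] LieRing.ofAssociativeRing

/-- In the free Lie algebra over `ℝ` on three generators `X₁, X₂, X₃`, if
`V = X₁ + α₂ X₂ + α₃ X₃` and `W = b₁ ⁅X₁,X₂⁆ + b₂ ⁅X₂,X₃⁆ + b₃ ⁅X₁,X₃⁆` satisfy
`⁅V, W⁆ = 0`, then `b₁ = b₂ = b₃ = 0`. -/
theorem freeLieAlgebra_centralizer_degree_two_trivial
    (α₂ α₃ b₁ b₂ b₃ : ℝ)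
    (h : ⁅(FreeLieAlgebra.of ℝ (0 : Fin 3) + α₂ • FreeLieAlgebra.of ℝ (1 : Fin 3)
            + α₃ • FreeLieAlgebra.of ℝ (2 : Fin 3)),
          (b₁ • ⁅FreeLieAlgebra.of ℝ (0 : Fin 3), FreeLieAlgebra.of ℝ (1 : Fin 3)⁆
            + b₂ • ⁅FreeLieAlgebra.of ℝ (1 : Fin 3), FreeLieAlgebra.of ℝ (2 : Fin 3)⁆
            + b₃ • ⁅FreeLieAlgebra.of ℝ (0 : Fin 3), FreeLieAlgebra.of ℝ (2 : Fin 3)⁆)⁆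
          = 0) :
    b₁ = 0 ∧ b₂ = 0 ∧ b₃ = 0 := by
  -- First representation: X₁ ↦ E₁₂+E₂₃, X₂ ↦ E₃₄, X₃ ↦ 0 detects b₁.
  have hb1 : b₁ = 0 := by
    have h1 := congrArg (FreeLieAlgebra.lift ℝ
      (![flaAux_A, flaAux_B, 0] : Fin 3 → Matrix (Fin 4) (Fin 4) ℝ)) h
    simp only [LieHom.map_lie, map_add, map_smul,
      FreeLieAlgebra.lift_of_apply, map_zero] at h1
    have h2 := congrArg (fun M : Matrix (Fin 4) (Fin 4) ℝ => M 0 3) h1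
    simp [Ring.lie_def, Matrix.mul_apply, Fin.sum_univ_four, flaAux_A, flaAux_B] at h2
    linarith [h2]
  -- Second representation: X₁ ↦ E₁₂+E₂₃, X₂ ↦ 0, X₃ ↦ E₃₄ detects b₃.
  have hb3 : b₃ = 0 := by
    have h1 := congrArg (FreeLieAlgebra.lift ℝ
      (![flaAux_A, 0, flaAux_B] : Fin 3 → Matrix (Fin 4) (Fin 4) ℝ)) h
    simp only [LieHom.map_lie, map_add, map_smul,
      FreeLieAlgebra.lift_of_apply, map_zero] at h1
    have h2 := congrArg (fun M : Matrix (Fin 4) (Fin 4) ℝ => M 0 3) h1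
    simp [Ring.lie_def, Matrix.mul_apply, Fin.sum_univ_four, flaAux_A, flaAux_B] at h2
    linarith [h2]
  -- Third representation: X₁ ↦ E₃₁, X₂ ↦ E₁₂, X₃ ↦ E₂₃ detects b₂ (given b₁ = b₃ = 0).
  have hb2 : b₂ = 0 := by
    subst hb1; subst hb3
    have h1 := congrArg (FreeLieAlgebra.lift ℝ
      (![flaAux_C, flaAux_D, flaAux_E] : Fin 3 → Matrix (Fin 3) (Fin 3) ℝ)) h
    simp only [LieHom.map_lie, map_add, map_smul,
      FreeLieAlgebra.lift_of_apply, map_zero] at h1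
    have h2 := congrArg (fun M : Matrix (Fin 3) (Fin 3) ℝ => M 0 0) h1
    simp [Ring.lie_def, Matrix.mul_apply, Fin.sum_univ_three, flaAux_C, flaAux_D,
      flaAux_E] at h2
    linarith [h2]
  exact ⟨hb1, hb2, hb3⟩
end
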